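/- arXiv:2506.00024 — 2 statements merged into one kernel-verified Lean document; each statement's English description precedes it below -/
import Mathlib

section
/- Let G be a paratopological gyrogroup and a ∈ G. Then the right translation R_a : G → G, x ↦ x⊕a, is a homeomorphism, and its inverse is given by R_a^{-1} = L_{⊖a} ∘ R_{⊖a} ∘ L_a, i.e., R_a^{-1}(x) = (⊖a) ⊕ ((a⊕x) ⊕ (⊖a)). -/
open Pointwise

/-- A gyrogroup: a groupoid with identity, inverses, gyroautomorphisms satisfying
the left gyroassociative law and the left loop property. -/
class Gyrogroup (G : Type*) extends Zero G, Neg G, Add G where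
  zero_add : ∀ a : G, 0 + a = a
  add_zero : ∀ a : G, a + 0 = a
  neg_add_cancel : ∀ a : G, -a + a = 0
  add_neg_cancel : ∀ a : G, a + -a = 0
  gyr : G → G → G → G
  gyr_bijective : ∀ a b : G, Function.Bijective (gyr a b)
  gyr_add : ∀ a b x y : G, gyr a b (x + y) = gyr a b x + gyr a b y
  gyrassoc : ∀ a b c : G, a + (b + c) = a + b + gyr a b c
  loop : ∀ a b : G, gyr (a + b) b = gyr a b

namespace GyroAux

open Gyrogroup

variable {G : Type*} [Gyrogroup G]

lemma lcancel {a b c : G} (h : a + b = a + c) : b = c := by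
  have h1 : -a + (a + b) = -a + (a + c) := by rw [h]
  rw [Gyrogroup.gyrassoc, Gyrogroup.gyrassoc, Gyrogroup.neg_add_cancel,
    Gyrogroup.zero_add, Gyrogroup.zero_add] at h1
  exact (Gyrogroup.gyr_bijective (-a) a).1 h1

lemma gyr_zero_left (b c : G) : gyr (0 : G) b c = c := by
  have h := Gyrogroup.gyrassoc (0 : G) b c
  rw [Gyrogroup.zero_add, Gyrogroup.zero_add] at h
  exact (lcancel h).symm

lemma gyr_neg_self (b c : G) : gyr (-b) b c = c := by
  have h := Gyrogroup.loop (-b) b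
  rw [Gyrogroup.neg_add_cancel] at h
  rw [← h, gyr_zero_left]

lemma gyr_self_neg (b c : G) : gyr b (-b) c = c := by
  have h := Gyrogroup.loop b (-b)
  rw [Gyrogroup.add_neg_cancel] at h
  rw [← h, gyr_zero_left]

lemma neg_add_cancel_left (a b : G) : -a + (a + b) = b := by
  rw [Gyrogroup.gyrassoc, Gyrogroup.neg_add_cancel, Gyrogroup.zero_add, gyr_neg_self]

lemma add_neg_cancel_left (a b : G) : a + (-a + b) = b := by
  rw [Gyrogroup.gyrassoc, Gyrogroup.add_neg_cancel, Gyrogroup.zero_add, gyr_self_neg]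

/-- Key consequence of the left loop property. -/
lemma key (a b e : G) : (a + b) + e = ((a + b) + b) + (-(a + b) + (a + e)) := by
  have h := Gyrogroup.gyrassoc (a + b) b (-b + e)
  rw [add_neg_cancel_left, Gyrogroup.loop] at h
  have h2 : gyr a b (-b + e) = -(a + b) + (a + e) := by
    have h3 := Gyrogroup.gyrassoc a b (-b + e)
    rw [add_neg_cancel_left] at h3
    rw [h3, neg_add_cancel_left]
  rw [h2] at h
  exact h

/-- The left Bol identity holds in every gyrogroup. -/
lemma bol (p q d : G) : p + (q + (p + d)) = (p + (q + p)) + d := by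
  have h := key (-q) (q + p) (q + (p + d))
  rw [neg_add_cancel_left q p, neg_add_cancel_left q (p + d),
    neg_add_cancel_left p d] at h
  exact h

lemma right_inv_aux (a x : G) : (-a + ((a + x) + -a)) + a = x := by
  have h := bol (-a) (a + x) a
  rw [Gyrogroup.neg_add_cancel, Gyrogroup.add_zero, neg_add_cancel_left] at h
  exact h.symm

lemma left_inv_aux (a x : G) : -a + ((a + (x + a)) + -a) = x := by
  have h := bol a x (-a)
  rw [Gyrogroup.add_neg_cancel, Gyrogroup.add_zero] at h
  rw [← h, neg_add_cancel_left]

end GyroAux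

/-- In a paratopological gyrogroup, the right translation R_a : x ↦ x⊕a is a homeomorphism,
with inverse R_a⁻¹ = L_{⊖a} ∘ R_{⊖a} ∘ L_a, i.e. R_a⁻¹(x) = (⊖a) ⊕ ((a⊕x) ⊕ (⊖a)). -/
theorem right_translation_isHomeomorph {G : Type*} [Gyrogroup G] [TopologicalSpace G]
    [ContinuousAdd G] (a : G) :
    IsHomeomorph (fun x : G => x + a) ∧
      Function.LeftInverse (fun x : G => -a + ((a + x) + -a)) (fun x : G => x + a) ∧
      Function.RightInverse (fun x : G => -a + ((a + x) + -a)) (fun x : G => x + a) := by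
  have hleft : Function.LeftInverse (fun x : G => -a + ((a + x) + -a))
      (fun x : G => x + a) := fun x => GyroAux.left_inv_aux a x
  have hright : Function.RightInverse (fun x : G => -a + ((a + x) + -a))
      (fun x : G => x + a) := fun x => GyroAux.right_inv_aux a x
  refine ⟨?_, hleft, hright⟩
  exact (Homeomorph.mk
    ⟨fun x : G => x + a, fun x : G => -a + ((a + x) + -a), hleft, hright⟩
    (continuous_id.add continuous_const)
    (continuous_const.add ((continuous_const.add continuous_id).add
      continuous_const))).isHomeomorph
end

section
/- Let G be a paratopological gyrogroup and γ a family of open neighborhoods of 0 satisfying: (a) for each U ∈ γ there is V ∈ γ with V⊕V ⊆ U; (b) for each U ∈ γ and x,y ∈ G there is V ∈ γ with gyr[x,y](V) ⊆ U; (c) γ is subordinated to each U ∈ γ; (d) ⋂_{V∈γ}(⊖V) ⊆ U for all U ∈ γ. Then N = ⋂_{U∈γ} U equals ⋂_{U∈γ}(U ∩ ⊖U) and is an invariant (normal) subgyrogroup of G. -/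
open Pointwise

/-- A family γ of neighborhoods of 0 is subordinated to U if for all x, y there are
members V₁, V₂ of γ with ⊖(x⊕y)⊕((V₁⊕x)⊕y) ⊆ U and V₂ ⊆ ⊖(x⊕y)⊕((U⊕x)⊕y). -/
def Subordinated {G : Type*} [Add G] [Neg G] (γ : Set (Set G)) (U : Set G) : Prop :=
  (∀ x y : G, ∃ V ∈ γ, {-(x + y)} + ((V + {x}) + {y}) ⊆ U) ∧
  (∀ x y : G, ∃ V ∈ γ, V ⊆ {-(x + y)} + ((U + {x}) + {y}))

/-- A paratopological gyrogroup is ω-balanced if every neighborhood of the identity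
has a countable subordinated family of open neighborhoods of the identity. -/
def OmegaBalanced (G : Type*) [Add G] [Neg G] [Zero G] [TopologicalSpace G] : Prop :=
  ∀ U ∈ nhds (0 : G), ∃ γ : Set (Set G), γ.Countable ∧
    (∀ V ∈ γ, IsOpen V ∧ (0 : G) ∈ V) ∧ Subordinated γ U

section lemmas
variable {G : Type*} [Gyrogroup G]

lemma gy_left_cancel {a x y : G} (h : a + x = a + y) : x = y := by
  have h1 : ∀ z : G, -a + (a + z) = Gyrogroup.gyr (-a) a z := by
    intro z
    rw [Gyrogroup.gyrassoc, Gyrogroup.neg_add_cancel, Gyrogroup.zero_add]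
  exact (Gyrogroup.gyr_bijective (-a) a).injective (by rw [← h1, ← h1, h])

lemma gy_gyr_zero_left (a c : G) : Gyrogroup.gyr (0 : G) a c = c := by
  apply gy_left_cancel (a := a)
  have h := Gyrogroup.gyrassoc (0 : G) a c
  rw [Gyrogroup.zero_add, Gyrogroup.zero_add] at h
  exact h.symm

lemma gy_neg_add_cancel_left (a x : G) : -a + (a + x) = x := by
  have h := Gyrogroup.gyrassoc (-a) a x
  rw [Gyrogroup.neg_add_cancel, Gyrogroup.zero_add] at h
  have hl := Gyrogroup.loop (-a) a
  rw [Gyrogroup.neg_add_cancel] at hl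
  rw [h, ← hl, gy_gyr_zero_left]

lemma gy_add_neg_cancel_left (a x : G) : a + (-a + x) = x := by
  have h := Gyrogroup.gyrassoc a (-a) x
  rw [Gyrogroup.add_neg_cancel, Gyrogroup.zero_add] at h
  have hl := Gyrogroup.loop a (-a)
  rw [Gyrogroup.add_neg_cancel] at hl
  rw [h, ← hl, gy_gyr_zero_left]

lemma gy_neg_neg (a : G) : -(-a) = a :=
  gy_left_cancel (a := -a)
    (by rw [Gyrogroup.add_neg_cancel, Gyrogroup.neg_add_cancel])

lemma gy_right_cancel {a x y : G} (h : x + a = y + a) : x = y := by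
  have key : ∀ t : G, t = (t + a) + Gyrogroup.gyr (t + a) a (-a) := by
    intro t
    have h1 := Gyrogroup.gyrassoc t a (-a)
    rw [Gyrogroup.add_neg_cancel, Gyrogroup.add_zero] at h1
    rw [← Gyrogroup.loop t a] at h1
    exact h1
  have hx := key x
  have hy := key y
  rw [h] at hx
  exact hx.trans hy.symm

lemma gy_gyrator (a b z : G) : -(a + b) + (a + (b + z)) = Gyrogroup.gyr a b z := by
  have h := Gyrogroup.gyrassoc a b z
  rw [h, gy_neg_add_cancel_left]

lemma gy_ldagger (a d w : G) : -(d + (-a + d)) + (d + w) = -d + (a + w) := by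
  have hl := Gyrogroup.loop a (-a + d)
  rw [gy_add_neg_cancel_left] at hl
  have h1 := gy_gyrator d (-a + d) (-(-a + d) + w)
  have h2 := gy_gyrator a (-a + d) (-(-a + d) + w)
  simp only [gy_add_neg_cancel_left] at h1 h2
  rw [hl] at h1
  exact h1.trans h2.symm

lemma gy_bol (d e b : G) : (d + (e + d)) + b = d + (e + (d + b)) := by
  have h := gy_ldagger (-e) d (e + (d + b))
  rw [gy_neg_neg] at h
  rw [gy_neg_add_cancel_left, gy_neg_add_cancel_left] at h
  calc (d + (e + d)) + b
      = (d + (e + d)) + (-(d + (e + d)) + (d + (e + (d + b)))) := by rw [h]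
    _ = d + (e + (d + b)) := gy_add_neg_cancel_left _ _

lemma gy_exists_add_right (b c : G) : (-b + ((b + c) + -b)) + b = c := by
  have h := gy_bol (-b) (b + c) b
  rw [Gyrogroup.neg_add_cancel, Gyrogroup.add_zero, gy_neg_add_cancel_left] at h
  exact h

end lemmas

/-- If a family γ of open neighborhoods of 0 in a paratopological gyrogroup satisfies
(a)-(d), then N = ⋂γ equals ⋂_{U∈γ}(U ∩ ⊖U) and is an invariant (normal) subgyrogroup:
it contains 0, is closed under ⊕, ⊖, and all gyr[a,b], and satisfies
⊖(a⊕b)⊕((N⊕a)⊕b) = N for all a, b. -/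
theorem invariant_subgyrogroup_of_family {G : Type*} [Gyrogroup G] [TopologicalSpace G]
    [ContinuousAdd G] (γ : Set (Set G))
    (hnbhd : ∀ V ∈ γ, IsOpen V ∧ (0 : G) ∈ V)
    (ha : ∀ U ∈ γ, ∃ V ∈ γ, V + V ⊆ U)
    (hb : ∀ U ∈ γ, ∀ x y : G, ∃ V ∈ γ, Gyrogroup.gyr x y '' V ⊆ U)
    (hc : ∀ U ∈ γ, Subordinated γ U)
    (hd : ∀ U ∈ γ, (⋂ V ∈ γ, -V) ⊆ U) :
    (⋂₀ γ = ⋂ U ∈ γ, (U ∩ -U)) ∧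
    ((0 : G) ∈ ⋂₀ γ) ∧
    (∀ a b : G, a ∈ ⋂₀ γ → b ∈ ⋂₀ γ → a + b ∈ ⋂₀ γ) ∧
    (∀ a : G, a ∈ ⋂₀ γ → -a ∈ ⋂₀ γ) ∧
    (∀ a b : G, Gyrogroup.gyr a b '' ⋂₀ γ ⊆ ⋂₀ γ) ∧
    (∀ a b : G, {-(a + b)} + ((⋂₀ γ + {a}) + {b}) = ⋂₀ γ) := by
  -- closure under negation
  have hneg : ∀ x : G, x ∈ ⋂₀ γ → -x ∈ ⋂₀ γ := by
    intro x hx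
    rw [Set.mem_sInter]
    intro U hU
    apply hd U hU
    simp only [Set.mem_iInter]
    intro V hV
    rw [Set.mem_neg, gy_neg_neg]
    exact Set.mem_sInter.mp hx V hV
  refine ⟨?_, ?_, ?_, ?_, ?_, ?_⟩
  · -- N = ⋂ U ∈ γ, U ∩ -U
    ext x
    simp only [Set.mem_sInter, Set.mem_iInter, Set.mem_inter_iff, Set.mem_neg]
    constructor
    · intro h U hU
      exact ⟨h U hU, Set.mem_sInter.mp (hneg x (Set.mem_sInter.mpr h)) U hU⟩
    · intro h U hU
      exact (h U hU).1
  · exact Set.mem_sInter.mpr fun U hU => (hnbhd U hU).2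
  · intro a b haN hbN
    rw [Set.mem_sInter]
    intro U hU
    obtain ⟨V, hV, hVV⟩ := ha U hU
    exact hVV (Set.add_mem_add (Set.mem_sInter.mp haN V hV) (Set.mem_sInter.mp hbN V hV))
  · exact hneg
  · intro a b y hy
    obtain ⟨v, hvN, rfl⟩ := hy
    rw [Set.mem_sInter]
    intro U hU
    obtain ⟨V, hV, hVU⟩ := hb U hU a b
    exact hVU ⟨v, Set.mem_sInter.mp hvN V hV, rfl⟩
  · intro a b
    apply Set.Subset.antisymm
    · intro x hx
      simp only [Set.singleton_add, Set.add_singleton, Set.mem_image, exists_exists_and_eq_and]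
        at hx
      obtain ⟨n, hnN, rfl⟩ := hx
      rw [Set.mem_sInter]
      intro U hU
      obtain ⟨V, hV, hsub⟩ := (hc U hU).1 a b
      apply hsub
      simp only [Set.singleton_add, Set.add_singleton, Set.mem_image, exists_exists_and_eq_and]
      exact ⟨n, Set.mem_sInter.mp hnN V hV, rfl⟩
    · intro x hx
      obtain ⟨m1, hm1⟩ : ∃ m1 : G, m1 + b = (a + b) + x :=
        ⟨_, gy_exists_add_right b ((a + b) + x)⟩
      obtain ⟨m, hm⟩ : ∃ m : G, m + a = m1 := ⟨_, gy_exists_add_right a m1⟩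
      have key : -(a + b) + ((m + a) + b) = x := by
        rw [hm, hm1, gy_neg_add_cancel_left]
      have hmN : m ∈ ⋂₀ γ := by
        rw [Set.mem_sInter]
        intro U hU
        obtain ⟨V, hV, hVsub⟩ := (hc U hU).2 a b
        have hxmem := hVsub (Set.mem_sInter.mp hx V hV)
        simp only [Set.singleton_add, Set.add_singleton, Set.mem_image,
          exists_exists_and_eq_and] at hxmem
        obtain ⟨u, hu, hux⟩ := hxmem
        have h1 : (u + a) + b = (m + a) + b := by
          have h2 : (a + b) + (-(a + b) + ((u + a) + b)) = (a + b) + x := by rw [hux]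
          rw [gy_add_neg_cancel_left] at h2
          rw [h2, ← hm1, hm]
        have : u = m := gy_right_cancel (gy_right_cancel h1)
        rwa [← this]
      simp only [Set.singleton_add, Set.add_singleton, Set.mem_image, exists_exists_and_eq_and]
      exact ⟨m, hmN, key⟩
end
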